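/- Let P be an algebra of S-probabilities all of whose elements take only the values 0 and 1 (a concrete logic), assume P is not a Boolean algebra of S-probabilities, let P̄ be its 0,1-extension on S̄, and let q̄ be an S̄-probability taking only the values 0 and 1 with q̄ ∉ P̄. Then P̄ is not a Boolean algebra of S̄-probabilities, and there exists a Boolean algebra Q of S̄-probabilities with P̄ ∪ {q̄} ⊆ Q (namely the set of all {0,1}-valued functions on S̄); hence q̄ is critical. -/
import Mathlib


/-- An `S`-probability: a function `p : S → ℝ` with `0 ≤ p s ≤ 1` for all `s`. -/
def IsProb (S : Type*) (p : S → ℝ) : Prop := ∀ s, 0 ≤ p s ∧ p s ≤ 1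

/-- An algebra of `S`-probabilities: a set of `S`-probabilities containing the constant `0`,
closed under `p ↦ 1 - p`, and containing `p + q + r` for pairwise orthogonal `p, q, r`
(where `p ⊥ q` means `p ≤ 1 - q`). -/
def IsAlg (S : Type*) (P : Set (S → ℝ)) : Prop :=
  (∀ p ∈ P, IsProb S p) ∧
  (0 : S → ℝ) ∈ P ∧
  (∀ p ∈ P, 1 - p ∈ P) ∧
  ∀ p q r : S → ℝ, p ∈ P → q ∈ P → r ∈ P →
    p ≤ 1 - q → q ≤ 1 - r → r ≤ 1 - p → p + q + r ∈ P

/-- A function `p : S → ℝ` is varying if it is neither everywhere `≤ 1/2`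
nor everywhere `≥ 1/2`. -/
def Varying (S : Type*) (p : S → ℝ) : Prop :=
  ¬(∀ s, p s ≤ 1 / 2) ∧ ¬(∀ s, 1 / 2 ≤ p s)

/-- `m` is the infimum of `p` and `q` within the poset `(P, ≤)`. -/
def IsInfIn (S : Type*) (P : Set (S → ℝ)) (p q m : S → ℝ) : Prop :=
  m ∈ P ∧ m ≤ p ∧ m ≤ q ∧ ∀ u ∈ P, u ≤ p → u ≤ q → u ≤ m

/-- `j` is the supremum of `p` and `q` within the poset `(P, ≤)`. -/
def IsSupIn (S : Type*) (P : Set (S → ℝ)) (p q j : S → ℝ) : Prop :=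
  j ∈ P ∧ p ≤ j ∧ q ≤ j ∧ ∀ u ∈ P, p ≤ u → q ≤ u → j ≤ u

/-- A Boolean algebra of `S`-probabilities: an algebra of `S`-probabilities in which any two
elements have an infimum and a supremum within `(P, ≤)`, the resulting lattice is distributive,
and for every `p ∈ P` the infimum of `p` and `1 - p` is `0` and their supremum is `1`. -/
def IsBooleanAlg (S : Type*) (P : Set (S → ℝ)) : Prop :=
  IsAlg S P ∧
  (∀ p ∈ P, ∀ q ∈ P, (∃ m, IsInfIn S P p q m) ∧ (∃ j, IsSupIn S P p q j)) ∧
  (∀ p ∈ P, ∀ q ∈ P, ∀ r ∈ P, ∀ qr a pq pr b : S → ℝ,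
    IsSupIn S P q r qr → IsInfIn S P p qr a →
    IsInfIn S P p q pq → IsInfIn S P p r pr → IsSupIn S P pq pr b → a = b) ∧
  ∀ p ∈ P, IsInfIn S P p (1 - p) 0 ∧ IsSupIn S P p (1 - p) 1

/-- The extension `(p, c)` of `p : S → ℝ` to `S̄ = S ∪ {s̄}` (modelled as `Option S`,
with `none` playing the role of the new state `s̄`), taking the value `c` at `s̄`. -/
def extFun {S : Type*} (p : S → ℝ) (c : ℝ) : Option S → ℝ :=
  fun x => Option.elim x c p

/-- The `0,1`-extension `P̄ = {(p,0) : p ∈ P} ∪ {(p,1) : p ∈ P}` of a set `P` of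
`S`-probabilities. -/
def extSet {S : Type*} (P : Set (S → ℝ)) : Set (Option S → ℝ) :=
  {f | ∃ p ∈ P, f = extFun p 0 ∨ f = extFun p 1}

/-- `p` and `q` are partially reciprocal below `1/2`. -/
def PRBelow (S : Type*) (p q : S → ℝ) : Prop := ∀ s, min (p s) (q s) ≤ 1 / 2

/-- `p` and `q` are partially reciprocal above `1/2`. -/
def PRAbove (S : Type*) (p q : S → ℝ) : Prop := ∀ s, 1 / 2 ≤ max (p s) (q s)

/-- `p` and `q` are reciprocal. -/
def Reciprocal (S : Type*) (p q : S → ℝ) : Prop := PRBelow S p q ∧ PRAbove S p q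

/-- Two functions are incomparable in the pointwise order. -/
def Incomp {S : Type*} (a b : S → ℝ) : Prop := ¬a ≤ b ∧ ¬b ≤ a

/-- An algebra of `S`-probabilities of type `MO₂`,
with the six pairwise distinct elements `0, p₁, 1 - p₁, p₂, 1 - p₂, 1` such that
`p₁, 1 - p₁, p₂, 1 - p₂` are pairwise incomparable. -/
def IsMO2 (S : Type*) (P : Set (S → ℝ)) (p1 p2 : S → ℝ) : Prop :=
  IsAlg S P ∧
  P = {0, p1, 1 - p1, p2, 1 - p2, 1} ∧
  ([(0 : S → ℝ), p1, 1 - p1, p2, 1 - p2, 1].Pairwise (· ≠ ·)) ∧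
  Incomp p1 (1 - p1) ∧ Incomp p1 p2 ∧ Incomp p1 (1 - p2) ∧
  Incomp (1 - p1) p2 ∧ Incomp (1 - p1) (1 - p2) ∧ Incomp p2 (1 - p2)

/-- `f` is an atom of `P`: a minimal element of `P \ {0}`. -/
def IsAtomOf (S : Type*) (P : Set (S → ℝ)) (f : S → ℝ) : Prop :=
  f ∈ P ∧ f ≠ 0 ∧ ∀ g ∈ P, g ≠ 0 → g ≤ f → g = f

section Aux

lemma inf_unique' {S : Type*} {P : Set (S → ℝ)} {p q m m' : S → ℝ}
    (h : IsInfIn S P p q m) (h' : IsInfIn S P p q m') : m = m' :=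
  le_antisymm (h'.2.2.2 m h.1 h.2.1 h.2.2.1) (h.2.2.2 m' h'.1 h'.2.1 h'.2.2.1)

lemma sup_unique' {S : Type*} {P : Set (S → ℝ)} {p q j j' : S → ℝ}
    (h : IsSupIn S P p q j) (h' : IsSupIn S P p q j') : j = j' :=
  le_antisymm (h.2.2.2 j' h'.1 h'.2.1 h'.2.2.1) (h'.2.2.2 j h.1 h.2.1 h.2.2.1)

lemma allQ_bool (T : Type*) : IsBooleanAlg T {f : T → ℝ | ∀ x, f x = 0 ∨ f x = 1} := by
  set Q := {f : T → ℝ | ∀ x, f x = 0 ∨ f x = 1} with hQ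
  have hmemQ : ∀ f : T → ℝ, f ∈ Q ↔ ∀ x, f x = 0 ∨ f x = 1 := fun f => Iff.rfl
  have hbound : ∀ f ∈ Q, ∀ x, 0 ≤ f x ∧ f x ≤ 1 := by
    intro f hf x; rcases (hmemQ f).1 hf x with h | h <;> simp [h]
  have hmin : ∀ f ∈ Q, ∀ g ∈ Q, (fun x => min (f x) (g x)) ∈ Q := by
    intro f hf g hg
    rw [hmemQ]; intro x
    rcases (hmemQ f).1 hf x with h|h <;> rcases (hmemQ g).1 hg x with h'|h' <;> simp [h, h']
  have hmaxm : ∀ f ∈ Q, ∀ g ∈ Q, (fun x => max (f x) (g x)) ∈ Q := by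
    intro f hf g hg
    rw [hmemQ]; intro x
    rcases (hmemQ f).1 hf x with h|h <;> rcases (hmemQ g).1 hg x with h'|h' <;> simp [h, h']
  have hinf : ∀ f ∈ Q, ∀ g ∈ Q, IsInfIn T Q f g (fun x => min (f x) (g x)) := by
    intro f hf g hg
    exact ⟨hmin f hf g hg, fun x => min_le_left _ _, fun x => min_le_right _ _,
      fun u _ h1 h2 x => le_min (h1 x) (h2 x)⟩
  have hsup : ∀ f ∈ Q, ∀ g ∈ Q, IsSupIn T Q f g (fun x => max (f x) (g x)) := by
    intro f hf g hg
    exact ⟨hmaxm f hf g hg, fun x => le_max_left _ _, fun x => le_max_right _ _,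
      fun u _ h1 h2 x => max_le (h1 x) (h2 x)⟩
  have hzero : (0 : T → ℝ) ∈ Q := by rw [hmemQ]; intro x; left; rfl
  have hcompl : ∀ f ∈ Q, (1 : T → ℝ) - f ∈ Q := by
    intro f hf; rw [hmemQ]; intro x
    rcases (hmemQ f).1 hf x with h|h <;> simp [h]
  refine ⟨⟨fun f hf x => hbound f hf x, hzero, hcompl, ?_⟩, ?_, ?_, ?_⟩
  · intro p q r hp hq hr hpq hqr hrp
    rw [hmemQ]; intro x
    have o1 := hpq x; have o2 := hqr x; have o3 := hrp x
    simp only [Pi.sub_apply, Pi.one_apply] at o1 o2 o3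
    rcases (hmemQ p).1 hp x with h1|h1 <;> rcases (hmemQ q).1 hq x with h2|h2 <;>
      rcases (hmemQ r).1 hr x with h3|h3 <;>
      simp only [Pi.add_apply, h1, h2, h3] at * <;> norm_num <;> linarith
  · intro p hp q hq
    exact ⟨⟨_, hinf p hp q hq⟩, ⟨_, hsup p hp q hq⟩⟩
  · intro p hp q hq r hr qr a pq pr b hqr ha hpq hpr hb
    have e1 : qr = fun x => max (q x) (r x) := sup_unique' hqr (hsup q hq r hr)
    have hqrQ : qr ∈ Q := hqr.1
    have e2 : a = fun x => min (p x) (qr x) := inf_unique' ha (hinf p hp qr hqrQ)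
    have e3 : pq = fun x => min (p x) (q x) := inf_unique' hpq (hinf p hp q hq)
    have e4 : pr = fun x => min (p x) (r x) := inf_unique' hpr (hinf p hp r hr)
    have e5 : b = fun x => max (pq x) (pr x) := sup_unique' hb (hsup pq hpq.1 pr hpr.1)
    subst e1 e3 e4
    rw [e2, e5]
    funext x
    show min (p x) (max (q x) (r x)) = max (min (p x) (q x)) (min (p x) (r x))
    exact min_max_distrib_left ..
  · intro p hp
    have hb := hbound p hp
    constructor
    · refine ⟨hzero, fun x => (hb x).1, ?_, ?_⟩
      · intro x; simp only [Pi.zero_apply, Pi.sub_apply, Pi.one_apply]; linarith [(hb x).2]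
      · intro u hu h1 h2 x
        have := h2 x
        simp only [Pi.sub_apply, Pi.one_apply] at this
        have h1x := h1 x
        rcases (hmemQ p).1 hp x with h|h <;> simp [h] at this h1x ⊢ <;> linarith
    · refine ⟨by simpa using hcompl 0 hzero, ?_, ?_, ?_⟩
      · intro x; simp only [Pi.sub_apply, Pi.one_apply, Pi.zero_apply]; linarith [(hb x).2]
      · intro x; simp only [Pi.sub_apply, Pi.one_apply, Pi.zero_apply]; linarith [(hb x).1]
      · intro u hu h1 h2 x
        have h2x := h2 x
        simp only [Pi.sub_apply, Pi.one_apply, Pi.zero_apply] at h2x ⊢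
        have h1x := h1 x
        rcases (hmemQ p).1 hp x with h|h <;> simp [h] at h1x h2x <;> linarith

lemma one_sub_ext {S : Type*} (p : S → ℝ) (c : ℝ) :
    (1 : Option S → ℝ) - extFun p c = extFun (1 - p) (1 - c) := by
  funext x; cases x <;> simp [extFun]

lemma ext_le_ext {S : Type*} {p q : S → ℝ} {c d : ℝ} :
    extFun p c ≤ extFun q d ↔ p ≤ q ∧ c ≤ d := by
  constructor
  · intro h
    exact ⟨fun s => h (some s), h none⟩
  · rintro ⟨h1, h2⟩ x
    cases x with
    | none => exact h2
    | some s => exact h1 s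

lemma lift_inf {S : Type*} {P : Set (S → ℝ)} {p q m : S → ℝ} (h : IsInfIn S P p q m) :
    IsInfIn (Option S) (extSet P) (extFun p 1) (extFun q 1) (extFun m 1) := by
  obtain ⟨hm, hmp, hmq, hmax⟩ := h
  refine ⟨⟨m, hm, Or.inr rfl⟩, ext_le_ext.2 ⟨hmp, le_refl 1⟩, ext_le_ext.2 ⟨hmq, le_refl 1⟩, ?_⟩
  rintro u ⟨v, hv, (rfl | rfl)⟩ hup huq <;>
  · refine ext_le_ext.2 ⟨hmax v hv (ext_le_ext.1 hup).1 (ext_le_ext.1 huq).1, by norm_num⟩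

lemma lift_sup {S : Type*} {P : Set (S → ℝ)} {p q j : S → ℝ} (h : IsSupIn S P p q j) :
    IsSupIn (Option S) (extSet P) (extFun p 1) (extFun q 1) (extFun j 1) := by
  obtain ⟨hj, hpj, hqj, hmin⟩ := h
  refine ⟨⟨j, hj, Or.inr rfl⟩, ext_le_ext.2 ⟨hpj, le_refl 1⟩, ext_le_ext.2 ⟨hqj, le_refl 1⟩, ?_⟩
  rintro u ⟨v, hv, (rfl | rfl)⟩ hup huq
  · exact absurd ((ext_le_ext.1 hup).2) (by norm_num)
  · exact ext_le_ext.2 ⟨hmin v hv (ext_le_ext.1 hup).1 (ext_le_ext.1 huq).1, le_refl 1⟩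

end Aux

theorem stmt_7 {S : Type*} [Nonempty S] {P : Set (S → ℝ)} (hP : IsAlg S P)
    (h01 : ∀ p ∈ P, ∀ s, p s = 0 ∨ p s = 1)
    (hnB : ¬IsBooleanAlg S P)
    {qbar : Option S → ℝ} (hq01 : ∀ x, qbar x = 0 ∨ qbar x = 1)
    (hqn : qbar ∉ extSet P) :
    ¬IsBooleanAlg (Option S) (extSet P) ∧
    IsBooleanAlg (Option S) {f : Option S → ℝ | ∀ x, f x = 0 ∨ f x = 1} ∧
    extSet P ∪ {qbar} ⊆ {f : Option S → ℝ | ∀ x, f x = 0 ∨ f x = 1} := by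
  obtain ⟨hprob, hzero, hcmpl, hsum⟩ := hP
  obtain ⟨s0⟩ : Nonempty S := inferInstance
  refine ⟨?_, allQ_bool (Option S), ?_⟩
  · intro hB
    apply hnB
    obtain ⟨halg, hexists, hdist, hcomp⟩ := hB
    refine ⟨⟨hprob, hzero, hcmpl, hsum⟩, ?_, ?_, ?_⟩
    · intro p hp q hq
      obtain ⟨⟨mb, hmb⟩, ⟨jb, hjb⟩⟩ := hexists (extFun p 1) ⟨p, hp, Or.inr rfl⟩
        (extFun q 1) ⟨q, hq, Or.inr rfl⟩
      obtain ⟨⟨m, hmP, hmc⟩, hm1, hm2, hm3⟩ := hmb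
      have keym : ∀ s, mb (some s) = m s := by
        rcases hmc with rfl | rfl <;> intro s <;> rfl
      obtain ⟨⟨j, hjP, hjc⟩, hj1, hj2, hj3⟩ := hjb
      have keyj : ∀ s, jb (some s) = j s := by
        rcases hjc with rfl | rfl <;> intro s <;> rfl
      constructor
      · refine ⟨m, hmP, fun s => by rw [← keym s]; exact hm1 (some s),
          fun s => by rw [← keym s]; exact hm2 (some s), ?_⟩
        intro u hu h1 h2 s
        have h3 : extFun u 0 ≤ mb := by
          apply hm3 (extFun u 0) ⟨u, hu, Or.inl rfl⟩
          · intro x; cases x with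
            | none => show (0:ℝ) ≤ 1; norm_num
            | some s => exact h1 s
          · intro x; cases x with
            | none => show (0:ℝ) ≤ 1; norm_num
            | some s => exact h2 s
        rw [← keym s]; exact h3 (some s)
      · refine ⟨j, hjP, fun s => by rw [← keyj s]; exact hj1 (some s),
          fun s => by rw [← keyj s]; exact hj2 (some s), ?_⟩
        intro u hu h1 h2 s
        have h3 : jb ≤ extFun u 1 := by
          apply hj3 (extFun u 1) ⟨u, hu, Or.inr rfl⟩
          · exact ext_le_ext.2 ⟨h1, le_refl 1⟩
          · exact ext_le_ext.2 ⟨h2, le_refl 1⟩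
        rw [← keyj s]; exact h3 (some s)
    · intro p hp q hq r hr qr a pq pr b hqr ha hpq hpr hb
      have := hdist (extFun p 1) ⟨p, hp, Or.inr rfl⟩ (extFun q 1) ⟨q, hq, Or.inr rfl⟩
        (extFun r 1) ⟨r, hr, Or.inr rfl⟩ (extFun qr 1) (extFun a 1) (extFun pq 1)
        (extFun pr 1) (extFun b 1) (lift_sup hqr) (lift_inf ha) (lift_inf hpq)
        (lift_inf hpr) (lift_sup hb)
      funext s
      exact congrFun this (some s)
    · intro p hp
      have hco := hcomp (extFun p 1) ⟨p, hp, Or.inr rfl⟩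
      rw [one_sub_ext] at hco
      norm_num at hco
      obtain ⟨⟨_, _, _, hinf3⟩, ⟨_, _, _, hsup3⟩⟩ := hco
      have hbp := hprob p hp
      constructor
      · refine ⟨hzero, fun s => (hbp s).1, fun s => by
          simp only [Pi.zero_apply, Pi.sub_apply, Pi.one_apply]; linarith [(hbp s).2], ?_⟩
        intro u hu h1 h2 s
        have h3 : extFun u 0 ≤ (0 : Option S → ℝ) := by
          apply hinf3 (extFun u 0) ⟨u, hu, Or.inl rfl⟩
          · exact ext_le_ext.2 ⟨h1, by norm_num⟩
          · exact ext_le_ext.2 ⟨h2, le_refl 0⟩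
        exact h3 (some s)
      · refine ⟨by simpa using hcmpl 0 hzero, fun s => by
          simp only [Pi.sub_apply, Pi.one_apply, Pi.zero_apply]; linarith [(hbp s).2],
          fun s => by
          simp only [Pi.sub_apply, Pi.one_apply, Pi.zero_apply]; linarith [(hbp s).1], ?_⟩
        intro u hu h1 h2 s
        have h3 : (1 : Option S → ℝ) ≤ extFun u 1 := by
          apply hsup3 (extFun u 1) ⟨u, hu, Or.inr rfl⟩
          · exact ext_le_ext.2 ⟨h1, le_refl 1⟩
          · exact ext_le_ext.2 ⟨h2, by norm_num⟩
        have h4 := h3 (some s)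
        simp only [Pi.sub_apply, Pi.one_apply, Pi.zero_apply] at h4 ⊢
        exact h4
  · rintro f (hf | hf)
    · obtain ⟨p, hp, (rfl | rfl)⟩ := hf <;>
      · intro x
        cases x with
        | none => simp [extFun]
        | some s => exact h01 p hp s
    · rw [Set.mem_singleton_iff] at hf
      subst hf
      exact hq01
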